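/- Assume Ω ⊂ ℝⁿ is a nonempty open bounded convex set satisfying an interior sphere condition, let u be a solution of the Dirichlet problem (D), and set w := −u^{3/4} on the closure of Ω (so w = 0 on ∂Ω). For x ∈ Ω, define w**(x) as the infimum of Σ_{i=1}^k λᵢ w(xᵢ) over all k ≤ n+1, points x₁,…,x_k in the closure of Ω and weights λ₁,…,λ_k > 0 with Σλᵢ = 1 and Σλᵢxᵢ = x. If x₁,…,x_k in the closure of Ω and λ₁,…,λ_k > 0 with Σλᵢ = 1 satisfy x = Σλᵢxᵢ and w**(x) = Σλᵢw(xᵢ), then x₁,…,x_k all belong to Ω (none lies on ∂Ω). -/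

import Mathlib

open Set Metric Filter MeasureTheory
open scoped RealInnerProductSpace Topology NNReal

noncomputable section

abbrev Euc (n : ℕ) := EuclideanSpace ℝ (Fin n)

def infLap {n : ℕ} (φ : Euc n → ℝ) (x : Euc n) : ℝ :=
  ⟪fderiv ℝ (gradient φ) x (gradient φ x), gradient φ x⟫

def IsViscSubsol {n : ℕ} (Ω : Set (Euc n)) (f : Euc n → ℝ → ℝ) (u : Euc n → ℝ) : Prop :=
  ContinuousOn u Ω ∧
  ∀ x₀ ∈ Ω, ∀ φ : Euc n → ℝ, ContDiff ℝ 2 φ →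
    IsLocalMaxOn (fun x => u x - φ x) Ω x₀ → -infLap φ x₀ - f x₀ (u x₀) ≤ 0

def IsViscSupersol {n : ℕ} (Ω : Set (Euc n)) (f : Euc n → ℝ → ℝ) (u : Euc n → ℝ) : Prop :=
  ContinuousOn u Ω ∧
  ∀ x₀ ∈ Ω, ∀ φ : Euc n → ℝ, ContDiff ℝ 2 φ →
    IsLocalMinOn (fun x => u x - φ x) Ω x₀ → 0 ≤ -infLap φ x₀ - f x₀ (u x₀)

def IsDirichletSol {n : ℕ} (Ω : Set (Euc n)) (u : Euc n → ℝ) : Prop :=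
  ContinuousOn u (closure Ω) ∧ (∀ x ∈ frontier Ω, u x = 0) ∧
  IsViscSubsol Ω (fun _ _ => 1) u ∧ IsViscSupersol Ω (fun _ _ => 1) u

def IntSphereCond {n : ℕ} (Ω : Set (Euc n)) : Prop :=
  ∀ y ∈ frontier Ω, ∃ z : Euc n, ∃ R : ℝ, 0 < R ∧ ball z R ⊆ Ω ∧ y ∈ sphere z R

/-- The set of values `Σ λᵢ w(xᵢ)` over convex combinations (with at most `n+1` points of the
closure of `Ω`) representing `x`, whose infimum defines the convex envelope `w**`. -/
def envVals {n : ℕ} (Ω : Set (Euc n)) (w : Euc n → ℝ) (x : Euc n) : Set ℝ :=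
  {s | ∃ k : ℕ, 1 ≤ k ∧ k ≤ n + 1 ∧ ∃ xs : Fin k → Euc n, ∃ lam : Fin k → ℝ,
    (∀ i, xs i ∈ closure Ω) ∧ (∀ i, 0 < lam i) ∧ (∑ i, lam i) = 1 ∧
    (∑ i, lam i • xs i) = x ∧ s = ∑ i, lam i * w (xs i)}

set_option maxHeartbeats 1000000 in
lemma infLap_zero {n : ℕ} (x : Euc n) : infLap (fun _ => (0:ℝ)) x = 0 := by
  have hg : gradient (fun _ : Euc n => (0:ℝ)) = fun _ => (0 : Euc n) := by
    funext y
    exact (hasGradientAt_const (𝕜 := ℝ) (F := Euc n) (x := y) 0).gradient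
  rw [infLap, hg]
  simp [fderiv_const]

set_option maxHeartbeats 1000000 in
lemma hasGrad_v {n : ℕ} (a R : ℝ) (c x : Euc n) :
    HasGradientAt (fun y => a * (R^2 - ‖y - c‖^2)) ((-(2*a)) • (x - c)) x := by
  have h1 : HasFDerivAt (fun y : Euc n => ‖y - c‖^2) (2 • (innerSL ℝ (x - c))) x := by
    simpa using ((hasFDerivAt_id x).sub_const c).norm_sq
  have h2 : HasFDerivAt (fun y : Euc n => a * (R^2 - ‖y - c‖^2))
      (a • ((0 : Euc n →L[ℝ] ℝ) - 2 • (innerSL ℝ (x - c)))) x :=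
    ((hasFDerivAt_const (R^2) x).sub h1).const_mul a
  rw [hasGradientAt_iff_hasFDerivAt]
  refine h2.congr_fderiv ?_
  ext y
  simp [InnerProductSpace.toDual_apply_apply, real_inner_smul_left]
  ring

set_option maxHeartbeats 1000000 in
lemma infLap_v {n : ℕ} (a R : ℝ) (c x : Euc n) :
    infLap (fun y => a * (R^2 - ‖y - c‖^2)) x = -(8*a^3) * ‖x - c‖^2 := by
  have hg : gradient (fun y : Euc n => a * (R^2 - ‖y - c‖^2))
      = fun y => (-(2*a)) • (y - c) := gradient_eq (fun y => hasGrad_v a R c y)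
  have hf : HasFDerivAt (fun y : Euc n => (-(2*a)) • (y - c))
      ((-(2*a)) • (ContinuousLinearMap.id ℝ (Euc n))) x :=
    ((hasFDerivAt_id x).sub_const c).const_smul (-(2*a))
  rw [infLap, hg, hf.fderiv]
  rw [ContinuousLinearMap.smul_apply, ContinuousLinearMap.id_apply,
    real_inner_smul_left, real_inner_smul_left, real_inner_smul_right,
    real_inner_self_eq_norm_mul_norm, ← sq]
  ring

lemma contDiff_v {n : ℕ} (a R : ℝ) (c : Euc n) :
    ContDiff ℝ 2 (fun y : Euc n => a * (R^2 - ‖y - c‖^2)) := by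
  apply contDiff_const.mul
  apply contDiff_const.sub
  exact (contDiff_id.sub contDiff_const).norm_sq ℝ

lemma u_nonneg_pos {n : ℕ} {Ω : Set (Euc n)} (hne : Ω.Nonempty) (hopen : IsOpen Ω)
    (hbdd : Bornology.IsBounded Ω) {u : Euc n → ℝ}
    (hucont : ContinuousOn u (closure Ω)) (hub : ∀ z ∈ frontier Ω, u z = 0)
    (hsup : IsViscSupersol Ω (fun _ _ => 1) u) :
    (∀ z ∈ closure Ω, 0 ≤ u z) ∧ (∀ z ∈ Ω, 0 < u z) := by
  have hid : (fun x : Euc n => u x - (fun _ : Euc n => (0:ℝ)) x) = u := by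
    funext z; simp
  have hnomin : ∀ x₀ ∈ Ω, ¬ IsLocalMinOn u Ω x₀ := by
    intro x₀ hx₀ hminloc
    have h := hsup.2 x₀ hx₀ (fun _ => 0) contDiff_const (by rw [hid]; exact hminloc)
    rw [infLap_zero] at h
    norm_num at h
  have hKcomp : IsCompact (closure Ω) := hbdd.isCompact_closure
  obtain ⟨m, hmK, hmmin⟩ := hKcomp.exists_isMinOn (hne.mono subset_closure) hucont
  have hloc_of_min : ∀ z, IsMinOn u (closure Ω) z → z ∈ Ω → False := by
    intro z hzmin hzΩ
    refine hnomin z hzΩ ?_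
    exact hzmin.filter_mono (Filter.le_principal_iff.mpr
      (Filter.mem_of_superset self_mem_nhdsWithin subset_closure))
  have hmfr : m ∈ frontier Ω := by
    rw [hopen.frontier_eq]
    refine ⟨hmK, fun hmΩ => hloc_of_min m hmmin hmΩ⟩
  have hm0 : u m = 0 := hub m hmfr
  have hnn : ∀ z ∈ closure Ω, 0 ≤ u z := fun z hz => hm0 ▸ hmmin hz
  refine ⟨hnn, fun z hz => ?_⟩
  rcases lt_or_eq_of_le (hnn z (subset_closure hz)) with h | h
  · exact h
  · exfalso
    exact hloc_of_min z (fun y hy => by rw [← h]; exact hnn y hy) hz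

set_option maxHeartbeats 1000000 in
lemma barrier {n : ℕ} {Ω : Set (Euc n)} {u : Euc n → ℝ}
    (hucont : ContinuousOn u (closure Ω))
    (hsup : IsViscSupersol Ω (fun _ _ => 1) u)
    (hnn : ∀ z ∈ closure Ω, 0 ≤ u z)
    {zc : Euc n} {R a : ℝ} (hR : 0 < R) (ha : 0 < a) (h8 : 8*a^3*R^2 < 1)
    (hball : ball zc R ⊆ Ω) :
    ∀ y ∈ closedBall zc R, a * (R^2 - ‖y - zc‖^2) ≤ u y := by
  set v : Euc n → ℝ := fun y => a * (R^2 - ‖y - zc‖^2) with hv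
  have hKsub : closedBall zc R ⊆ closure Ω := by
    rw [← closure_ball zc hR.ne']; exact closure_mono hball
  have hKcomp : IsCompact (closedBall zc R) := isCompact_closedBall zc R
  have hvcont : Continuous v := (contDiff_v a R zc).continuous
  have hcont : ContinuousOn (fun y => u y - v y) (closedBall zc R) :=
    (hucont.mono hKsub).sub hvcont.continuousOn
  obtain ⟨x₀, hx₀K, hminK⟩ := hKcomp.exists_isMinOn (nonempty_closedBall.2 hR.le) hcont
  by_contra hcon
  push_neg at hcon
  obtain ⟨y₀, hy₀, hy₀lt⟩ := hcon
  have hvy : v y₀ = a * (R^2 - ‖y₀ - zc‖^2) := rfl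
  have hneg : u x₀ - v x₀ < 0 := lt_of_le_of_lt (hminK hy₀) (by simp only; linarith)
  have hx₀ball : x₀ ∈ ball zc R := by
    rcases lt_or_eq_of_le (mem_closedBall.1 hx₀K) with h | h
    · exact mem_ball.2 h
    · exfalso
      have hv0 : v x₀ = 0 := by
        have : ‖x₀ - zc‖ = R := by rw [← dist_eq_norm]; exact h
        rw [hv]; simp only [this]; ring
      have := hnn x₀ (hKsub hx₀K)
      linarith
  have hloc : IsLocalMinOn (fun y => u y - v y) Ω x₀ := by
    have hmem : ball zc R ∈ 𝓝[Ω] x₀ :=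
      mem_nhdsWithin_of_mem_nhds (isOpen_ball.mem_nhds hx₀ball)
    filter_upwards [hmem] with z hz
    exact hminK (ball_subset_closedBall hz)
  have hkey := hsup.2 x₀ (hball hx₀ball) v (contDiff_v a R zc) hloc
  rw [show v = fun y => a * (R^2 - ‖y - zc‖^2) from rfl] at hkey
  rw [infLap_v] at hkey
  have hone : (fun (_ : Euc n) (_ : ℝ) => (1:ℝ)) x₀ (u x₀) = 1 := rfl
  rw [hone] at hkey
  have hnorm : ‖x₀ - zc‖ ≤ R := by
    rw [← dist_eq_norm]; exact mem_closedBall.1 hx₀K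
  have h2 : ‖x₀ - zc‖^2 ≤ R^2 := by nlinarith [norm_nonneg (x₀ - zc)]
  have h3 : 8*a^3*‖x₀ - zc‖^2 ≤ 8*a^3*R^2 :=
    mul_le_mul_of_nonneg_left h2 (by positivity)
  linarith

set_option maxHeartbeats 1000000 in
lemma support_ineq {n : ℕ} {Ω : Set (Euc n)} (hopen : IsOpen Ω) (hconv : Convex ℝ Ω)
    {p zc x : Euc n} {R : ℝ} (hR : 0 < R) (hp : p ∉ Ω) (hx : x ∈ Ω)
    (hball : ball zc R ⊆ Ω) (hps : ‖p - zc‖ = R) :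
    0 < ⟪zc - p, x - p⟫ := by
  obtain ⟨f, hf⟩ := geometric_hahn_banach_open_point hconv hopen hp
  set ν := (InnerProductSpace.toDual ℝ (Euc n)).symm f with hν
  have hfeq : ∀ z, f z = ⟪ν, z⟫ := fun z => (InnerProductSpace.toDual_symm_apply).symm
  have hν0 : ν ≠ 0 := by
    intro h0
    have hfx := hf x hx
    rw [hfeq x, hfeq p, h0] at hfx
    simp at hfx
  have hνpos : 0 < ‖ν‖ := norm_pos_iff.2 hν0
  have hle : ∀ z ∈ closedBall zc R, f z ≤ f p := by
    intro z hz
    have hzc : z ∈ closure (ball zc R) := by rwa [closure_ball zc hR.ne']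
    have hsub : closure (ball zc R) ⊆ {w | f w ≤ f p} :=
      closure_minimal (fun w hw => (hf w (hball hw)).le)
        (isClosed_le f.continuous continuous_const)
    exact hsub hzc
  have hq : zc + (R / ‖ν‖) • ν ∈ closedBall zc R := by
    rw [mem_closedBall, dist_eq_norm]
    have : zc + (R / ‖ν‖) • ν - zc = (R / ‖ν‖) • ν := by abel
    rw [this, norm_smul, Real.norm_eq_abs, abs_of_nonneg (div_nonneg hR.le hνpos.le),
      div_mul_cancel₀ _ hνpos.ne']
  have h1 : ⟪ν, zc⟫ + R * ‖ν‖ ≤ ⟪ν, p⟫ := by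
    have h := hle _ hq
    rw [hfeq, hfeq, inner_add_right, real_inner_smul_right,
      real_inner_self_eq_norm_mul_norm] at h
    have : R / ‖ν‖ * (‖ν‖ * ‖ν‖) = R * ‖ν‖ := by field_simp
    linarith [this ▸ h]
  have hCS : ⟪ν, p - zc⟫ ≤ ‖ν‖ * ‖p - zc‖ := real_inner_le_norm ν (p - zc)
  have heq : ⟪ν, p - zc⟫ = ‖ν‖ * ‖p - zc‖ := by
    apply le_antisymm hCS
    rw [inner_sub_right, hps]
    linarith
  have heq2 : ‖p - zc‖ • ν = ‖ν‖ • (p - zc) := inner_eq_norm_mul_iff_real.1 heq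
  have hxin : ⟪ν, x - p⟫ < 0 := by
    have hfx := hf x hx
    rw [hfeq x, hfeq p] at hfx
    rw [inner_sub_right]
    linarith
  have h3 : ‖ν‖ * ⟪p - zc, x - p⟫ = R * ⟪ν, x - p⟫ := by
    calc ‖ν‖ * ⟪p - zc, x - p⟫ = ⟪‖ν‖ • (p - zc), x - p⟫ := (real_inner_smul_left _ _ _).symm
    _ = ⟪‖p - zc‖ • ν, x - p⟫ := by rw [heq2]
    _ = R * ⟪ν, x - p⟫ := by rw [real_inner_smul_left, hps]
  have h4 : ⟪p - zc, x - p⟫ < 0 := by nlinarith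
  have h5 : ⟪zc - p, x - p⟫ = -⟪p - zc, x - p⟫ := by
    rw [show zc - p = -(p - zc) by abel, inner_neg_left]
  linarith

set_option maxHeartbeats 2000000 in
theorem stmt2 {n : ℕ} (Ω : Set (Euc n)) (hne : Ω.Nonempty) (hopen : IsOpen Ω)
    (hbdd : Bornology.IsBounded Ω) (hconv : Convex ℝ Ω) (hsphere : IntSphereCond Ω)
    (u : Euc n → ℝ) (hu : IsDirichletSol Ω u)
    (w : Euc n → ℝ) (hw : ∀ x, w x = -(u x ^ ((3:ℝ)/4)))
    (x : Euc n) (hx : x ∈ Ω)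
    (k : ℕ) (hk1 : 1 ≤ k) (hkn : k ≤ n + 1)
    (xs : Fin k → Euc n) (lam : Fin k → ℝ)
    (hxs : ∀ i, xs i ∈ closure Ω) (hlam : ∀ i, 0 < lam i)
    (hsum : (∑ i, lam i) = 1) (hcomb : (∑ i, lam i • xs i) = x)
    (hmin : (∑ i, lam i * w (xs i)) = sInf (envVals Ω w x)) :
    ∀ i, xs i ∈ Ω := by
  intro i₀
  by_contra hi
  obtain ⟨hucont, hub, hsubl, hsup⟩ := hu
  obtain ⟨hunn, hupos⟩ := u_nonneg_pos hne hopen hbdd hucont hub hsup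
  have hpfr : xs i₀ ∈ frontier Ω := by
    rw [hopen.frontier_eq]; exact ⟨hxs i₀, hi⟩
  obtain ⟨zc, R, hR, hball, hpsph⟩ := hsphere (xs i₀) hpfr
  have hps : ‖xs i₀ - zc‖ = R := by
    rw [← dist_eq_norm]; exact mem_sphere.1 hpsph
  -- the barrier constant a
  set a : ℝ := ((16*R^2)⁻¹) ^ ((1:ℝ)/3) with ha_def
  have ha : 0 < a := Real.rpow_pos_of_pos (by positivity) _
  have ha3 : a^(3:ℕ) = (16*R^2)⁻¹ := by
    rw [ha_def, ← Real.rpow_natCast (((16*R^2)⁻¹) ^ ((1:ℝ)/3)) 3,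
      ← Real.rpow_mul (by positivity)]
    norm_num
  have h8 : 8*a^3*R^2 < 1 := by
    have he : 8 * (16*R^2)⁻¹ * R^2 = 1/2 := by
      field_simp
      ring
    rw [ha3, he]
    norm_num
  have hbarrier := barrier hucont hsup hunn hR ha h8 hball
  have hγpos : 0 < ⟪zc - xs i₀, x - xs i₀⟫ := support_ineq hopen hconv hR hi hx hball hps
  set γ := ⟪zc - xs i₀, x - xs i₀⟫ with hγ_def
  have hxp : x ≠ xs i₀ := fun h => hi (h ▸ hx)
  set M := ‖x - xs i₀‖^2 with hM_def
  have hMpos : 0 < M := by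
    have h0 : x - xs i₀ ≠ 0 := sub_ne_zero.2 hxp
    rw [hM_def]; exact pow_pos (norm_pos_iff.2 h0) 2
  set S := ∑ i, lam i * w (xs i) with hS_def
  have hwfun : w = fun z => -(u z ^ ((3:ℝ)/4)) := funext hw
  have hwcont : ContinuousOn w (closure Ω) := by
    rw [hwfun]
    exact (hucont.rpow_const (fun z _ => Or.inr (by norm_num))).neg
  obtain ⟨m0, hm0K, hm0min⟩ := hbdd.isCompact_closure.exists_isMinOn
    (hne.mono subset_closure) hwcont
  have hbdd_env : BddBelow (envVals Ω w x) := by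
    refine ⟨w m0, ?_⟩
    rintro s ⟨k', hk1', hkn', ys, mu, hys, hmu, hmusum, hmucomb, rfl⟩
    calc w m0 = (∑ i, mu i) * w m0 := by rw [hmusum, one_mul]
    _ = ∑ i, mu i * w m0 := Finset.sum_mul _ _ _
    _ ≤ ∑ i, mu i * w (ys i) :=
        Finset.sum_le_sum (fun i _ => mul_le_mul_of_nonneg_left (hm0min (hys i)) (hmu i).le)
  have hwx_mem : w x ∈ envVals Ω w x := by
    refine ⟨1, le_refl 1, by omega, fun _ => x, fun _ => 1, fun _ => subset_closure hx,
      fun _ => one_pos, by simp, by simp, by simp⟩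
  have hSwx : S ≤ w x := by
    rw [hmin]; exact csInf_le hbdd_env hwx_mem
  have hwxneg : w x < 0 := by
    rw [hw]
    have := Real.rpow_pos_of_pos (hupos x hx) ((3:ℝ)/4)
    linarith
  have hSneg : S < 0 := lt_of_le_of_lt hSwx hwxneg
  set A := a * γ with hA_def
  have hApos : 0 < A := mul_pos ha hγpos
  have hS2 : 0 < S^2 := by rw [sq]; exact mul_pos_of_neg_of_neg hSneg hSneg
  have hS4 : 0 < S^4 := by
    rw [show (4:ℕ) = 2*2 from rfl, pow_mul]
    exact pow_pos hS2 2
  set T := A^3 / S^4 with hT_def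
  have hTpos : 0 < T := div_pos (pow_pos hApos 3) hS4
  set t := min (min (γ / M) (1/2)) (T/2) with ht_def
  have ht0 : 0 < t := lt_min (lt_min (div_pos hγpos hMpos) one_half_pos) (half_pos hTpos)
  have hthalf : t ≤ 1/2 := le_trans (min_le_left _ _) (min_le_right _ _)
  have htT : t ≤ T/2 := min_le_right _ _
  have htM : t * M ≤ γ := by
    have h : t ≤ γ / M := le_trans (min_le_left _ _) (min_le_left _ _)
    calc t * M ≤ (γ/M) * M := mul_le_mul_of_nonneg_right h hMpos.le
    _ = γ := div_mul_cancel₀ _ hMpos.ne'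
  set y := xs i₀ + t • (x - xs i₀) with hy_def
  have hynorm : ‖y - zc‖^2 ≤ R^2 - t * γ := by
    have hexp : y - zc = (xs i₀ - zc) + t • (x - xs i₀) := by rw [hy_def]; abel
    have hig : ⟪xs i₀ - zc, x - xs i₀⟫ = -γ := by
      rw [hγ_def, show xs i₀ - zc = -(zc - xs i₀) by abel, inner_neg_left]
    rw [hexp, norm_add_sq_real, hps, real_inner_smul_right, hig, norm_smul,
      Real.norm_eq_abs, abs_of_pos ht0]
    have hMsq : (t*‖x - xs i₀‖)^2 = t^2 * M := by rw [hM_def]; ring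
    rw [hMsq]
    have hq : t*(t*M) ≤ t*γ := mul_le_mul_of_nonneg_left htM ht0.le
    linarith [hq]
  have hyball : y ∈ ball zc R := by
    rw [mem_ball, dist_eq_norm]
    have h1 : ‖y - zc‖^2 < R^2 := by linarith [mul_pos ht0 hγpos]
    exact lt_of_pow_lt_pow_left₀ 2 hR.le h1
  have hyΩ : y ∈ Ω := hball hyball
  have hyu : a * (t * γ) ≤ u y := by
    have hb := hbarrier y (ball_subset_closedBall hyball)
    have h1 : t * γ ≤ R^2 - ‖y - zc‖^2 := by linarith [hynorm]
    calc a * (t*γ) ≤ a * (R^2 - ‖y - zc‖^2) := mul_le_mul_of_nonneg_left h1 ha.le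
    _ ≤ u y := hb
  have hwy : w y ≤ -((A*t) ^ ((3:ℝ)/4)) := by
    rw [hw]
    have h1 : A * t ≤ u y := by
      have hAe : A * t = a * (t * γ) := by rw [hA_def]; ring
      linarith [hAe ▸ hyu]
    have h2 := Real.rpow_le_rpow (by positivity) h1 (by norm_num : (0:ℝ) ≤ 3/4)
    linarith
  -- the competitor
  have hlam1 : lam i₀ ≤ 1 := by
    rw [← hsum]
    exact Finset.single_le_sum (fun i _ => (hlam i).le) (Finset.mem_univ i₀)
  set denom := 1 - t * (1 - lam i₀) with hden_def
  have hdenpos : 0 < denom := by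
    rw [hden_def]
    have h1 : (0:ℝ) ≤ 1 - lam i₀ := by linarith
    have h2 : t*(1-lam i₀) ≤ (1/2)*1 :=
      mul_le_mul hthalf (by linarith [hlam i₀]) h1 (by norm_num)
    linarith
  set c := (1 - t)/denom with hc_def
  set μ := lam i₀ / denom with hμ_def
  have hcpos : 0 < c := div_pos (by linarith) hdenpos
  have hμpos : 0 < μ := div_pos (hlam i₀) hdenpos
  have hd0 : denom ≠ 0 := ne_of_gt hdenpos
  have hc1 : μ * t + c = 1 := by
    rw [hμ_def, hc_def]
    field_simp
    rw [hden_def]; ring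
  have hc2 : μ * (1 - t) = c * lam i₀ := by
    rw [hμ_def, hc_def]
    field_simp
  have hc3 : 1 - c = t * μ := by
    rw [hμ_def, hc_def]
    field_simp
    rw [hden_def]; ring
  set xs' : Fin k → Euc n := Function.update xs i₀ y with hxs'_def
  set lam' : Fin k → ℝ := fun j => if j = i₀ then μ else c * lam j with hlam'_def
  have hxs'i : xs' i₀ = y := Function.update_self i₀ y xs
  have hxs'j : ∀ j, j ≠ i₀ → xs' j = xs j := fun j hj => Function.update_of_ne hj y xs
  have hlam'i : lam' i₀ = μ := if_pos rfl
  have hlam'j : ∀ j, j ≠ i₀ → lam' j = c * lam j := fun j hj => if_neg hj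
  have hlam'pos : ∀ j, 0 < lam' j := by
    intro j
    by_cases hj : j = i₀
    · rw [hj, hlam'i]; exact hμpos
    · rw [hlam'j j hj]; exact mul_pos hcpos (hlam j)
  have hxs'cl : ∀ j, xs' j ∈ closure Ω := by
    intro j
    by_cases hj : j = i₀
    · rw [hj, hxs'i]; exact subset_closure hyΩ
    · rw [hxs'j j hj]; exact hxs j
  have hsplit_lam : lam i₀ + ∑ j ∈ Finset.univ.erase i₀, lam j = 1 := by
    rw [Finset.add_sum_erase _ lam (Finset.mem_univ i₀)]; exact hsum
  have hsplit_vec : lam i₀ • xs i₀ + ∑ j ∈ Finset.univ.erase i₀, lam j • xs j = x := by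
    rw [Finset.add_sum_erase _ (fun j => lam j • xs j) (Finset.mem_univ i₀)]; exact hcomb
  have hwp : w (xs i₀) = 0 := by
    rw [hw, hub (xs i₀) hpfr, Real.zero_rpow (by norm_num : ((3:ℝ)/4) ≠ 0), neg_zero]
  have hWS : ∑ j ∈ Finset.univ.erase i₀, lam j * w (xs j) = S := by
    have := Finset.add_sum_erase Finset.univ (fun j => lam j * w (xs j)) (Finset.mem_univ i₀)
    rw [hS_def]
    rw [hwp] at this
    linarith [this]
  have hsum' : ∑ j, lam' j = 1 := by
    rw [← Finset.add_sum_erase _ lam' (Finset.mem_univ i₀), hlam'i]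
    rw [Finset.sum_congr rfl (fun j hj => hlam'j j (Finset.ne_of_mem_erase hj))]
    rw [← Finset.mul_sum]
    have hLe : ∑ j ∈ Finset.univ.erase i₀, lam j = 1 - lam i₀ := by linarith [hsplit_lam]
    rw [hLe, hμ_def, hc_def]
    field_simp
    rw [hden_def]; ring
  have hcomb' : ∑ j, lam' j • xs' j = x := by
    rw [← Finset.add_sum_erase _ (fun j => lam' j • xs' j) (Finset.mem_univ i₀)]
    simp only [hlam'i, hxs'i]
    rw [Finset.sum_congr rfl (fun j hj => by
      rw [hlam'j j (Finset.ne_of_mem_erase hj), hxs'j j (Finset.ne_of_mem_erase hj), mul_smul])]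
    rw [← Finset.smul_sum]
    have hZ : ∑ j ∈ Finset.univ.erase i₀, lam j • xs j = x - lam i₀ • xs i₀ := by
      rw [← hsplit_vec]; abel
    rw [hZ, hy_def]
    match_scalars
    · linear_combination hc2
    · linear_combination hc1
  have hVval : ∑ j, lam' j * w (xs' j) = μ * w y + c * S := by
    rw [← Finset.add_sum_erase _ (fun j => lam' j * w (xs' j)) (Finset.mem_univ i₀)]
    simp only [hlam'i, hxs'i]
    rw [Finset.sum_congr rfl (fun j hj => by
      rw [hlam'j j (Finset.ne_of_mem_erase hj), hxs'j j (Finset.ne_of_mem_erase hj), mul_assoc])]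
    rw [← Finset.mul_sum, hWS]
  have hVmem : μ * w y + c * S ∈ envVals Ω w x :=
    ⟨k, hk1, hkn, xs', lam', hxs'cl, hlam'pos, hsum', hcomb', hVval.symm⟩
  have hSV : S ≤ μ * w y + c * S :=
    le_trans (le_of_eq hmin) (csInf_le hbdd_env hVmem)
  have hkey : t * S ≤ w y := by
    have h1 : (1 - c) * S ≤ μ * w y := by linarith [hSV]
    rw [hc3] at h1
    have h2 : μ * (t * S) ≤ μ * w y := by linarith [h1]
    exact le_of_mul_le_mul_left h2 hμpos
  have hfinal : (A*t) ^ ((3:ℝ)/4) ≤ t * (-S) := by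
    have := hwy
    have h0 : t * (-S) = -(t*S) := by ring
    rw [h0]; linarith [hkey, hwy]
  have hpow : ((A*t) ^ ((3:ℝ)/4))^(4:ℕ) = (A*t)^(3:ℕ) := by
    rw [← Real.rpow_natCast ((A*t) ^ ((3:ℝ)/4)) 4, ← Real.rpow_mul (by positivity)]
    rw [show ((3:ℝ)/4 * (4:ℕ)) = ((3:ℕ):ℝ) by norm_num, Real.rpow_natCast]
  have h4 : (A*t)^(3:ℕ) ≤ (t*(-S))^(4:ℕ) := by
    rw [← hpow]
    exact pow_le_pow_left₀ (Real.rpow_nonneg (by positivity) _) hfinal 4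
  have hexpand : A^3 * t^3 ≤ (t * S^4) * t^3 := by
    have h5 : (A*t)^(3:ℕ) = A^3*t^3 := by ring
    have h6 : (t*(-S))^(4:ℕ) = (t*S^4)*t^3 := by ring
    rw [h5, h6] at h4
    exact h4
  have hA3 : A^3 ≤ t * S^4 := le_of_mul_le_mul_right hexpand (pow_pos ht0 3)
  have hfin2 : t * S^4 ≤ A^3/2 := by
    have hTT : t ≤ A^3/S^4/2 := by rw [← hT_def]; exact htT
    calc t * S^4 ≤ (A^3/S^4/2) * S^4 := mul_le_mul_of_nonneg_right hTT hS4.le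
    _ = A^3/2 := by field_simp [hSneg.ne]
  linarith [pow_pos hApos 3]
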